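/- There is a bijection φ between the set B(r,n) of colored biwords and the set of triplets (γ, λ, μ) where γ ∈ G(r,n), λ ∈ P_n is γ̃^{-1}-compatible, and μ ∈ P_n is γ-compatible. Here B(r,n) consists of pairs (g, f) ∈ P_n × N_0^{(r,n)} such that whenever g_i = g_{i+1} (for 0 ≤ i ≤ n−1, with g_0 := 0, f_0 := 0 of color 0): if f_i ≠ f_{i+1} then f_i^{c_i} < f_{i+1}^{c_{i+1}} in the colored order, and if f_i = f_{i+1} then c_i = 0 implies c_{i+1} = 0. The bijection is given by γ := π(f), λ := g, and μ := (f_{σ(1)},...,f_{σ(n)}) where γ = (c_1,...,c_n;σ). -/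

import Mathlib

open Finset

namespace Paper

/-- An element of `G(r,n) = ℤ_r ≀ S_n`: a pair (underlying permutation, color vector). -/
abbrev CPerm (r n : ℕ) := Equiv.Perm (Fin n) × (Fin n → Fin r)

/-- A colored sequence: values and colors. -/
abbrev CSeq (r n : ℕ) := (Fin n → ℕ) × (Fin n → Fin r)

variable {r n : ℕ}

/-- The order on colored integers (value, color):
`n^{r-1} < ⋯ < n^1 < ⋯ < 1^{r-1} < ⋯ < 1^1 < 0 < 1 < ⋯ < n`.
`clt a b` means `a < b`. -/
def clt (a b : ℕ × ℕ) : Prop :=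
  (0 < a.2 ∧ b.2 = 0) ∨
  (0 < a.2 ∧ 0 < b.2 ∧ (b.1 < a.1 ∨ (a.1 = b.1 ∧ b.2 < a.2))) ∨
  (a.2 = 0 ∧ b.2 = 0 ∧ a.1 < b.1)

instance (a b : ℕ × ℕ) : Decidable (clt a b) := by unfold clt; exact inferInstance

/-- The colored entry of `γ` at (0-based) position `i`: value `σ(i)` (1-based) with its color. -/
def entry (γ : CPerm r n) (i : Fin n) : ℕ × ℕ := ((γ.1 i : ℕ) + 1, (γ.2 i : ℕ))

/-- Window value `γ(i)` for `i ∈ [0,n]` (1-based positions), with `γ(0) := 0`. -/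
def wval (γ : CPerm r n) (i : ℕ) : ℕ × ℕ :=
  if h : 1 ≤ i ∧ i ≤ n then ((γ.1 ⟨i - 1, by omega⟩ : ℕ) + 1, (γ.2 ⟨i - 1, by omega⟩ : ℕ))
  else (0, 0)

/-- Descent set `Des_G(γ) = {i ∈ [0,n-1] : γ(i) > γ(i+1)}`, with `γ(0) := 0`. -/
def DesG (γ : CPerm r n) : Finset ℕ :=
  (range n).filter fun i => clt (wval γ (i + 1)) (wval γ i)

def desG (γ : CPerm r n) : ℕ := (DesG γ).card

def majG (γ : CPerm r n) : ℕ := ∑ i ∈ DesG γ, i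

def colG (γ : CPerm r n) : ℕ := ∑ i, (γ.2 i : ℕ)

/-- Number of inversions: pairs `i < j` with `γ(i) > γ(j)` in the colored order. -/
def invG (γ : CPerm r n) : ℕ :=
  ((univ : Finset (Fin n × Fin n)).filter fun p =>
    p.1 < p.2 ∧ clt (entry γ p.2) (entry γ p.1)).card

/-- Length `ℓ_G(γ) = inv(γ) + Σ_{c_i ≠ 0} (σ(i) + c_i - 1)` (σ(i) 1-based). -/
def lenG (γ : CPerm r n) : ℕ :=
  invG γ + ∑ i ∈ univ.filter (fun i => (γ.2 i : ℕ) ≠ 0), ((γ.1 i : ℕ) + (γ.2 i : ℕ))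

/-- Membership in `N_0^{(r,n)}`: a zero value has color 0. -/
def ValidSeq (f : CSeq r n) : Prop := ∀ i, f.1 i = 0 → (f.2 i : ℕ) = 0

/-- The defining property of `π(f) = γ = (c;σ)`:
`f_{σ(1)} ≤ … ≤ f_{σ(n)}`, `c_i(γ) = c_{σ(i)}(f)`, and `γ(i) < γ(i+1)` whenever
`f_{σ(i)} = f_{σ(i+1)}`. -/
def isPi (f : CSeq r n) (γ : CPerm r n) : Prop :=
  (∀ i j : Fin n, i ≤ j → f.1 (γ.1 i) ≤ f.1 (γ.1 j)) ∧
  (∀ i, γ.2 i = f.2 (γ.1 i)) ∧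
  (∀ i j : Fin n, (i : ℕ) + 1 = (j : ℕ) → f.1 (γ.1 i) = f.1 (γ.1 j) →
    clt (entry γ i) (entry γ j))

def maxf (f : CSeq r n) : ℕ := univ.sup f.1

def sumf (f : CSeq r n) : ℕ := ∑ i, f.1 i

/-- The partition `λ(f)` (relative to `γ = π(f)`), with values in `ℤ`:
`λ_i = f_{σ(i)} - #{j ∈ Des_G(γ) : j ≤ i-1}` (1-based `i`). -/
def lamZ (f : CSeq r n) (γ : CPerm r n) (i : Fin n) : ℤ :=
  (f.1 (γ.1 i) : ℤ) - ((DesG γ).filter (· ≤ (i : ℕ))).card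

/-- 1-based reading of an `n`-tuple, with value `0` at index `0` (and outside `[1,n]`). -/
def mval (μ : Fin n → ℕ) (i : ℕ) : ℕ :=
  if h : 1 ≤ i ∧ i ≤ n then μ ⟨i - 1, by omega⟩ else 0

/-- `μ` is `γ`-compatible: `μ_i < μ_{i+1}` for all `i ∈ Des_G(γ)` (with `μ_0 := 0`). -/
def compat (μ : Fin n → ℕ) (γ : CPerm r n) : Prop :=
  ∀ i ∈ DesG γ, mval μ i < mval μ (i + 1)

/-- The skew inverse `γ̃⁻¹ = (c_{σ⁻¹(1)},…,c_{σ⁻¹(n)}; σ⁻¹)`. -/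
def skewInv (γ : CPerm r n) : CPerm r n := (γ.1⁻¹, fun i => γ.2 (γ.1⁻¹ i))

/-- The group inverse: `γ⁻¹ = (c'; σ⁻¹)` with `c'_i = (r - c_{σ⁻¹(i)}) mod r`. -/
def cinv (γ : CPerm r n) : CPerm r n :=
  (γ.1⁻¹, fun i =>
    ⟨(r - (γ.2 (γ.1⁻¹ i) : ℕ)) % r,
      Nat.mod_lt _ (Nat.lt_of_le_of_lt (Nat.zero_le _) (γ.2 (γ.1⁻¹ i)).isLt)⟩)

/-- The group law of `G(r,n)`: `(c;σ)·(d;τ) = ((d_i + c_{τ(i)}) mod r; στ)`. -/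
def cmul (x y : CPerm r n) : CPerm r n :=
  (x.1 * y.1, fun i =>
    ⟨((y.2 i : ℕ) + (x.2 (y.1 i) : ℕ)) % r,
      Nat.mod_lt _ (Nat.lt_of_le_of_lt (Nat.zero_le _) (y.2 i).isLt)⟩)

/-- The color-forgetting projection `φ : G(r,n) → B_n = G(2,n)`. -/
def phi (γ : CPerm r n) : CPerm 2 n := (γ.1, fun i => ⟨min (γ.2 i : ℕ) 1, by omega⟩)

/-- `[m]_p = 1 + p + ⋯ + p^{m-1}`. -/
def qint {R : Type*} [CommRing R] (p : R) (m : ℕ) : R := ∑ j ∈ range m, p ^ j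

/-- `[m]_p! = [1]_p [2]_p ⋯ [m]_p`. -/
def qfact {R : Type*} [CommRing R] (p : R) (m : ℕ) : R := ∏ j ∈ range m, qint p (j + 1)

/-- `[m̂]_{b,p}! = (1+bp)(1+bp²)⋯(1+bp^m)·[m]_p!`. -/
def hqfact {R : Type*} [CommRing R] (b p : R) (m : ℕ) : R :=
  (∏ i ∈ range m, (1 + b * p ^ (i + 1))) * qfact p m

/-- A formal power series in two variables `X 0, X 1` from its coefficients. -/
def seriesOf2 (F : ℕ → ℕ → ℚ) : MvPowerSeries (Fin 2) ℚ := fun d => F (d 0) (d 1)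

/-- A formal power series in three variables from its coefficients. -/
def seriesOf3 (F : ℕ → ℕ → ℕ → ℚ) : MvPowerSeries (Fin 3) ℚ := fun d => F (d 0) (d 1) (d 2)


/-- 1-based value of the colored sequence `f` at `i ∈ [0,n]`, with `f_0 := 0`. -/
def fval (f : CSeq r n) (i : ℕ) : ℕ := mval f.1 i

/-- 1-based color of the colored sequence `f` at `i ∈ [0,n]`, with color of `f_0` being `0`. -/
def fcol (f : CSeq r n) (i : ℕ) : ℕ :=
  if h : 1 ≤ i ∧ i ≤ n then (f.2 ⟨i - 1, by omega⟩ : ℕ) else 0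

/-- The biword condition defining `B(r,n)` (Definition 6.1): whenever `g_i = g_{i+1}`
(with `g_0 := 0`, `f_0 := 0^0`): if `f_i ≠ f_{i+1}` then `f_i^{c_i} < f_{i+1}^{c_{i+1}}`,
and if `f_i = f_{i+1}` then `c_i = 0 ⟹ c_{i+1} = 0`. -/
def biword (g : Fin n → ℕ) (f : CSeq r n) : Prop :=
  ∀ i ∈ range n, mval g i = mval g (i + 1) →
    (fval f i ≠ fval f (i + 1) →
      clt (fval f i, fcol f i) (fval f (i + 1), fcol f (i + 1))) ∧
    (fval f i = fval f (i + 1) → fcol f i = 0 → fcol f (i + 1) = 0)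

section Aux

variable {r n : ℕ}

lemma perm_apply_inv_self {α : Type*} (e : Equiv.Perm α) (x : α) : e (e⁻¹ x) = x :=
  e.apply_symm_apply x

lemma perm_inv_apply_self {α : Type*} (e : Equiv.Perm α) (x : α) : e⁻¹ (e x) = x :=
  e.symm_apply_apply x

lemma clt_trichot (a b : ℕ × ℕ) : clt a b ∨ a = b ∨ clt b a := by
  obtain ⟨a1, a2⟩ := a; obtain ⟨b1, b2⟩ := b
  simp only [clt, Prod.mk.injEq]
  omega

lemma clt_asymm {a b : ℕ × ℕ} (h : clt a b) : ¬ clt b a := by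
  obtain ⟨a1, a2⟩ := a; obtain ⟨b1, b2⟩ := b
  simp only [clt] at *
  omega

lemma clt_trans {a b c : ℕ × ℕ} (h1 : clt a b) (h2 : clt b c) : clt a c := by
  obtain ⟨a1, a2⟩ := a; obtain ⟨b1, b2⟩ := b; obtain ⟨c1, c2⟩ := c
  simp only [clt] at *
  omega

lemma clt_irrefl (a : ℕ × ℕ) : ¬ clt a a := by
  obtain ⟨a1, a2⟩ := a; simp only [clt]; omega

lemma wval_zero (γ : CPerm r n) : wval γ 0 = (0, 0) := by simp [wval]

lemma wval_succ (γ : CPerm r n) (i : ℕ) (h : i < n) :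
    wval γ (i + 1) = entry γ ⟨i, h⟩ := by
  exact dif_pos ⟨Nat.le_add_left _ _, h⟩

lemma mval_zero (μ : Fin n → ℕ) : mval μ 0 = 0 := by simp [mval]

lemma mval_succ (μ : Fin n → ℕ) (i : ℕ) (h : i < n) :
    mval μ (i + 1) = μ ⟨i, h⟩ := by
  exact dif_pos ⟨Nat.le_add_left _ _, h⟩

lemma fcol_zero (f : CSeq r n) : fcol f 0 = 0 := by simp [fcol]

lemma fcol_succ (f : CSeq r n) (i : ℕ) (h : i < n) :
    fcol f (i + 1) = (f.2 ⟨i, h⟩ : ℕ) := by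
  exact dif_pos ⟨Nat.le_add_left _ _, h⟩

lemma mem_DesG {γ : CPerm r n} {i : ℕ} :
    i ∈ DesG γ ↔ i < n ∧ clt (wval γ (i + 1)) (wval γ i) := by
  simp [DesG]

lemma color_inv {f : CSeq r n} {γ : CPerm r n} (h : isPi f γ) (j : Fin n) :
    γ.2 (γ.1⁻¹ j) = f.2 j := by
  rw [h.2.1 (γ.1⁻¹ j), perm_apply_inv_self]

lemma entry_skewInv {f : CSeq r n} {γ : CPerm r n} (h : isPi f γ) (j : Fin n) :
    entry (skewInv γ) j = ((γ.1⁻¹ j : ℕ) + 1, (f.2 j : ℕ)) := by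
  simp only [entry, skewInv, color_inv h]

lemma entry_rank {f : CSeq r n} {γ : CPerm r n} (h : isPi f γ) (j : Fin n) :
    entry γ (γ.1⁻¹ j) = ((j : ℕ) + 1, (f.2 j : ℕ)) := by
  simp only [entry, perm_apply_inv_self, color_inv h]

lemma val_rank (f : CSeq r n) (γ : CPerm r n) (j : Fin n) :
    f.1 (γ.1 (γ.1⁻¹ j)) = f.1 j := by rw [perm_apply_inv_self]

lemma lt_of_val_lt {f : CSeq r n} {γ : CPerm r n} (h : isPi f γ) {a b : Fin n}
    (hv : f.1 (γ.1 a) < f.1 (γ.1 b)) : (a : ℕ) < (b : ℕ) := by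
  by_contra hab
  exact absurd (h.1 b a (by rw [Fin.le_def]; omega)) (by omega)

lemma block_clt {f : CSeq r n} {γ : CPerm r n} (h : isPi f γ) :
    ∀ (d : ℕ) (k l : Fin n), (k : ℕ) + d + 1 = (l : ℕ) →
      f.1 (γ.1 k) = f.1 (γ.1 l) → clt (entry γ k) (entry γ l) := by
  intro d
  induction d with
  | zero => intro k l hkl hv; exact h.2.2 k l (by omega) hv
  | succ d ih =>
      intro k l hkl hv
      have hm : (k : ℕ) + d + 1 < n := by omega
      have h1 : f.1 (γ.1 k) ≤ f.1 (γ.1 ⟨(k : ℕ) + d + 1, hm⟩) :=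
        h.1 k _ (by rw [Fin.le_def]; simp; omega)
      have h2 : f.1 (γ.1 ⟨(k : ℕ) + d + 1, hm⟩) ≤ f.1 (γ.1 l) :=
        h.1 _ l (by rw [Fin.le_def]; simp; omega)
      exact clt_trans (ih k ⟨(k : ℕ) + d + 1, hm⟩ (by simp) (by omega))
        (h.2.2 ⟨(k : ℕ) + d + 1, hm⟩ l (by simp; omega) (by omega))

lemma block_lt {f : CSeq r n} {γ : CPerm r n} (h : isPi f γ) {a b : Fin n}
    (hv : f.1 (γ.1 a) = f.1 (γ.1 b)) (hc : clt (entry γ a) (entry γ b)) :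
    (a : ℕ) < (b : ℕ) := by
  by_contra hab
  rcases Nat.lt_or_ge (b : ℕ) (a : ℕ) with hba | hba
  · exact clt_asymm (block_clt h ((a : ℕ) - (b : ℕ) - 1) b a (by omega) hv.symm) hc
  · have : a = b := Fin.ext (by omega)
    subst this; exact clt_irrefl _ hc

/-- Forward direction: `μ = f∘σ` is `γ`-compatible. -/
lemma compat_mu {f : CSeq r n} {γ : CPerm r n} (h : isPi f γ) (hvf : ValidSeq f) :
    compat (fun i => f.1 (γ.1 i)) γ := by
  intro i hi
  rw [mem_DesG] at hi
  obtain ⟨hin, hd⟩ := hi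
  rw [wval_succ γ i hin] at hd
  rw [mval_succ _ i hin]
  cases i with
  | zero =>
      rw [wval_zero] at hd
      rw [mval_zero]
      have hc : 0 < (γ.2 ⟨0, hin⟩ : ℕ) := by
        simp only [clt, entry] at hd; omega
      have hne : f.1 (γ.1 ⟨0, hin⟩) ≠ 0 := by
        intro h0
        have := hvf (γ.1 ⟨0, hin⟩) h0
        rw [← h.2.1 ⟨0, hin⟩] at this
        omega
      omega
  | succ j =>
      have hj : j < n := by omega
      rw [wval_succ γ j hj] at hd
      rw [mval_succ _ j hj]
      have hle : f.1 (γ.1 ⟨j, hj⟩) ≤ f.1 (γ.1 ⟨j + 1, hin⟩) :=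
        h.1 _ _ (by rw [Fin.le_def]; simp)
      rcases lt_or_eq_of_le hle with hlt | heq
      · exact hlt
      · exact absurd (h.2.2 ⟨j, hj⟩ ⟨j + 1, hin⟩ rfl heq) (clt_asymm hd)

/-- Forward direction: `g` is `skewInv γ`-compatible. -/
lemma compat_g {g : Fin n → ℕ} {f : CSeq r n} {γ : CPerm r n} (h : isPi f γ)
    (hg : Monotone g) (hvf : ValidSeq f) (hb : biword g f) :
    compat g (skewInv γ) := by
  intro i hi
  rw [mem_DesG] at hi
  obtain ⟨hin, hd⟩ := hi
  rw [wval_succ _ i hin, entry_skewInv h] at hd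
  have hle : mval g i ≤ mval g (i + 1) := by
    cases i with
    | zero => rw [mval_zero]; omega
    | succ j =>
        have hj : j < n := by omega
        rw [mval_succ _ j hj, mval_succ _ (j + 1) hin]
        exact hg (by rw [Fin.le_def]; simp)
  rcases lt_or_eq_of_le hle with hlt | heq
  · exact hlt
  exfalso
  have hbw := hb i (mem_range.mpr hin) heq
  cases i with
  | zero =>
      rw [wval_zero] at hd
      have hc : 0 < (f.2 ⟨0, hin⟩ : ℕ) := by
        simp only [clt] at hd; omega
      have hB1 := hbw.1
      have hB2 := hbw.2
      rw [show fval f 0 = 0 from mval_zero _, fcol_zero,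
        show fval f 1 = f.1 ⟨0, hin⟩ from mval_succ _ 0 hin, fcol_succ f 0 hin] at hB1 hB2
      by_cases hz : f.1 ⟨0, hin⟩ = 0
      · have := hvf ⟨0, hin⟩ hz; omega
      · have := hB1 (by omega)
        simp only [clt] at this
        omega
  | succ j =>
      have hj : j < n := by omega
      rw [wval_succ _ j hj, entry_skewInv h] at hd
      set a := γ.1⁻¹ (⟨j, hj⟩ : Fin n) with ha
      set b := γ.1⁻¹ (⟨j + 1, hin⟩ : Fin n) with hb'
      have hab : (a : ℕ) ≠ (b : ℕ) := by
        intro hh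
        have h2 : a = b := Fin.ext hh
        have h3 : (⟨j, hj⟩ : Fin n) = ⟨j + 1, hin⟩ := by
          rw [← perm_apply_inv_self γ.1 (⟨j, hj⟩ : Fin n),
            ← perm_apply_inv_self γ.1 (⟨j + 1, hin⟩ : Fin n), ← ha, ← hb', h2]
        simp [Fin.ext_iff] at h3
      have hvp : f.1 (γ.1 a) = f.1 ⟨j, hj⟩ := val_rank f γ _
      have hvq : f.1 (γ.1 b) = f.1 ⟨j + 1, hin⟩ := val_rank f γ _
      have F1 : f.1 (⟨j, hj⟩ : Fin n) < f.1 ⟨j + 1, hin⟩ → (a : ℕ) < (b : ℕ) := by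
        intro hh; exact lt_of_val_lt h (by omega)
      have F2 : f.1 (⟨j + 1, hin⟩ : Fin n) < f.1 ⟨j, hj⟩ → (b : ℕ) < (a : ℕ) := by
        intro hh; exact lt_of_val_lt h (by omega)
      have F3 : f.1 (⟨j, hj⟩ : Fin n) = f.1 ⟨j + 1, hin⟩ →
          0 < (f.2 (⟨j, hj⟩ : Fin n) : ℕ) → 0 < (f.2 (⟨j + 1, hin⟩ : Fin n) : ℕ) →
          (b : ℕ) < (a : ℕ) := by
        intro hv hcp hcq
        refine block_lt h (by omega) ?_
        rw [ha, hb', entry_rank h, entry_rank h]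
        exact Or.inr (Or.inl ⟨hcq, hcp, Or.inl (by simp)⟩)
      have F4 : f.1 (⟨j, hj⟩ : Fin n) = f.1 ⟨j + 1, hin⟩ →
          (f.2 (⟨j, hj⟩ : Fin n) : ℕ) = 0 → (f.2 (⟨j + 1, hin⟩ : Fin n) : ℕ) = 0 →
          (a : ℕ) < (b : ℕ) := by
        intro hv hcp hcq
        refine block_lt h (by omega) ?_
        rw [ha, hb', entry_rank h, entry_rank h]
        exact Or.inr (Or.inr ⟨hcp, hcq, by simp⟩)
      have hB1 := hbw.1
      have hB2 := hbw.2
      rw [show fval f (j + 1) = f.1 ⟨j, hj⟩ from mval_succ _ j hj,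
        show fval f (j + 1 + 1) = f.1 ⟨j + 1, hin⟩ from mval_succ _ (j + 1) hin,
        fcol_succ f j hj, fcol_succ f (j + 1) hin] at hB1 hB2
      simp only [clt] at hd hB1
      omega

/-- For a `γ`-compatible monotone `μ`, a zero value forces a zero color. -/
lemma valid_of_compat {γ : CPerm r n} {μ : Fin n → ℕ} (hμ : Monotone μ)
    (hc : compat μ γ) :
    ∀ (m : ℕ) (hm : m < n), μ ⟨m, hm⟩ = 0 → (γ.2 ⟨m, hm⟩ : ℕ) = 0 := by
  intro m
  induction m using Nat.strong_induction_on with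
  | _ m ih =>
    intro hm h0
    have hnd : ¬ clt (wval γ (m + 1)) (wval γ m) := by
      intro hdd
      have := hc m (mem_DesG.mpr ⟨hm, hdd⟩)
      rw [mval_succ _ m hm, h0] at this
      omega
    rw [wval_succ _ m hm] at hnd
    cases m with
    | zero =>
        rw [wval_zero] at hnd
        simp [clt, entry] at hnd
        omega
    | succ k =>
        have hk : k < n := by omega
        have h0k : μ ⟨k, hk⟩ = 0 := by
          have := hμ (show (⟨k, hk⟩ : Fin n) ≤ ⟨k + 1, hm⟩ by rw [Fin.le_def]; simp)
          omega
        have hck := ih k (by omega) hk h0k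
        rw [wval_succ _ k hk] at hnd
        have hne : (γ.1 ⟨k + 1, hm⟩ : ℕ) ≠ (γ.1 ⟨k, hk⟩ : ℕ) := by
          intro hh
          have h4 : (⟨k + 1, hm⟩ : Fin n) = ⟨k, hk⟩ := γ.1.injective (Fin.ext hh)
          simp [Fin.ext_iff] at h4
        simp only [clt, entry] at hnd
        omega

/-- Construction of `f` from `(γ, μ)`. -/
def mkF (γ : CPerm r n) (μ : Fin n → ℕ) : CSeq r n :=
  (fun j => μ (γ.1⁻¹ j), fun j => γ.2 (γ.1⁻¹ j))

lemma mkF_valid {γ : CPerm r n} {μ : Fin n → ℕ} (hμ : Monotone μ)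
    (hc : compat μ γ) : ValidSeq (mkF γ μ) := by
  intro j h0
  have := valid_of_compat hμ hc (γ.1⁻¹ j : ℕ) (γ.1⁻¹ j).isLt
  simp only [Fin.eta] at this
  exact this h0

lemma mkF_isPi {γ : CPerm r n} {μ : Fin n → ℕ} (hμ : Monotone μ)
    (hc : compat μ γ) : isPi (mkF γ μ) γ := by
  refine ⟨?_, ?_, ?_⟩
  · intro i j hij
    simp only [mkF, perm_inv_apply_self]
    exact hμ hij
  · intro i
    simp only [mkF, perm_inv_apply_self]
  · intro i j hij hv
    simp only [mkF, perm_inv_apply_self] at hv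
    have hjn : (i : ℕ) + 1 < n := by rw [hij]; exact j.isLt
    have hnd : ¬ clt (wval γ ((i : ℕ) + 1 + 1)) (wval γ ((i : ℕ) + 1)) := by
      intro hdd
      have := hc ((i : ℕ) + 1) (mem_DesG.mpr ⟨hjn, hdd⟩)
      rw [mval_succ _ _ i.isLt, mval_succ _ _ hjn] at this
      have e1 : (⟨(i : ℕ), i.isLt⟩ : Fin n) = i := Fin.eta i i.isLt
      have e2 : (⟨(i : ℕ) + 1, hjn⟩ : Fin n) = j := Fin.ext hij
      rw [e1, e2] at this
      omega
    rw [wval_succ _ _ i.isLt, wval_succ _ _ hjn] at hnd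
    have e1 : (⟨(i : ℕ), i.isLt⟩ : Fin n) = i := Fin.eta i i.isLt
    have e2 : (⟨(i : ℕ) + 1, hjn⟩ : Fin n) = j := Fin.ext hij
    rw [e1, e2] at hnd
    rcases clt_trichot (entry γ i) (entry γ j) with h1 | h2 | h3
    · exact h1
    · exfalso
      have : (γ.1 i : ℕ) = (γ.1 j : ℕ) := by
        have := congrArg Prod.fst h2
        simp only [entry] at this
        omega
      have h4 : i = j := γ.1.injective (Fin.ext this)
      rw [h4] at hij; omega
    · exact absurd h3 hnd

lemma mkF_biword {γ : CPerm r n} {lam μ : Fin n → ℕ} (hlam : Monotone lam)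
    (hclam : compat lam (skewInv γ)) (hμ : Monotone μ) :
    biword lam (mkF γ μ) := by
  intro i hi heq
  rw [mem_range] at hi
  have hnd : ¬ clt (wval (skewInv γ) (i + 1)) (wval (skewInv γ) i) := by
    intro hdd
    have := hclam i (mem_DesG.mpr ⟨hi, hdd⟩)
    omega
  rw [wval_succ _ i hi] at hnd
  cases i with
  | zero =>
      rw [wval_zero] at hnd
      have hc0 : (γ.2 (γ.1⁻¹ ⟨0, hi⟩) : ℕ) = 0 := by
        simp [clt, entry, skewInv] at hnd
        omega
      rw [show fval (mkF γ μ) 0 = 0 from mval_zero _, fcol_zero,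
        show fval (mkF γ μ) 1 = μ (γ.1⁻¹ ⟨0, hi⟩) from mval_succ _ 0 hi,
        fcol_succ (mkF γ μ) 0 hi]
      constructor
      · intro hne
        simp only [mkF]
        rw [hc0] -- goal : clt (0,0) (μ _, 0)
        exact Or.inr (Or.inr ⟨rfl, rfl, by omega⟩)
      · intro _ _
        simp only [mkF]
        exact hc0
  | succ j =>
      have hj : j < n := by omega
      rw [wval_succ _ j hj] at hnd
      have hab : (γ.1⁻¹ (⟨j, hj⟩ : Fin n) : ℕ) ≠ (γ.1⁻¹ (⟨j + 1, hi⟩ : Fin n) : ℕ) := by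
        intro hh
        have h2 : γ.1⁻¹ (⟨j, hj⟩ : Fin n) = γ.1⁻¹ (⟨j + 1, hi⟩ : Fin n) := Fin.ext hh
        have h3 : (⟨j, hj⟩ : Fin n) = ⟨j + 1, hi⟩ := by
          rw [← perm_apply_inv_self γ.1 (⟨j, hj⟩ : Fin n),
            ← perm_apply_inv_self γ.1 (⟨j + 1, hi⟩ : Fin n), h2]
        simp [Fin.ext_iff] at h3
      have hlt : clt (entry (skewInv γ) ⟨j, hj⟩) (entry (skewInv γ) ⟨j + 1, hi⟩) := by
        rcases clt_trichot (entry (skewInv γ) ⟨j, hj⟩) (entry (skewInv γ) ⟨j + 1, hi⟩) with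
          h1 | h2 | h3
        · exact h1
        · exfalso
          apply hab
          have := congrArg Prod.fst h2
          simp only [entry, skewInv] at this
          omega
        · exact absurd h3 hnd
      have G1 : (γ.1⁻¹ (⟨j, hj⟩ : Fin n) : ℕ) < (γ.1⁻¹ (⟨j + 1, hi⟩ : Fin n) : ℕ) →
          μ (γ.1⁻¹ ⟨j, hj⟩) ≤ μ (γ.1⁻¹ ⟨j + 1, hi⟩) := fun hh => hμ (by rw [Fin.le_def]; omega)
      have G2 : (γ.1⁻¹ (⟨j + 1, hi⟩ : Fin n) : ℕ) < (γ.1⁻¹ (⟨j, hj⟩ : Fin n) : ℕ) →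
          μ (γ.1⁻¹ ⟨j + 1, hi⟩) ≤ μ (γ.1⁻¹ ⟨j, hj⟩) := fun hh => hμ (by rw [Fin.le_def]; omega)
      rw [show fval (mkF γ μ) (j + 1) = μ (γ.1⁻¹ ⟨j, hj⟩) from mval_succ _ j hj,
        show fval (mkF γ μ) (j + 1 + 1) = μ (γ.1⁻¹ ⟨j + 1, hi⟩) from mval_succ _ (j + 1) hi,
        fcol_succ (mkF γ μ) j hj, fcol_succ (mkF γ μ) (j + 1) hi]
      simp only [mkF, entry, skewInv] at hlt ⊢
      simp only [clt] at hlt ⊢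
      omega

end Aux


/-- Theorem 6.3: the map `(g,f) ↦ (π(f), g, (f_{σ(1)},…,f_{σ(n)}))` is a
bijection between the set `B(r,n)` of colored biwords and the triplets `(γ, λ, μ)` with
`γ ∈ G(r,n)`, `λ ∈ P_n` a `γ̃⁻¹`-compatible partition and `μ ∈ P_n` a `γ`-compatible
partition. -/
theorem stmt12 (r n : ℕ) (hr : 0 < r)
    (π : CSeq r n → CPerm r n)
    (hπ : ∀ f, ValidSeq f → isPi f (π f) ∧ ∀ γ, isPi f γ → γ = π f) :
    Set.BijOn
      (fun gf : (Fin n → ℕ) × CSeq r n =>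
        (π gf.2, gf.1, fun i => gf.2.1 ((π gf.2).1 i)))
      {gf : (Fin n → ℕ) × CSeq r n | Monotone gf.1 ∧ ValidSeq gf.2 ∧ biword gf.1 gf.2}
      {t : CPerm r n × (Fin n → ℕ) × (Fin n → ℕ) |
        Monotone t.2.1 ∧ compat t.2.1 (skewInv t.1) ∧ Monotone t.2.2 ∧ compat t.2.2 t.1} := by
  refine ⟨?_, ?_, ?_⟩
  · -- MapsTo
    rintro ⟨g, f⟩ ⟨hg, hvf, hbw⟩
    have h := (hπ f hvf).1
    exact ⟨hg, compat_g h hg hvf hbw, fun a b hab => h.1 a b hab, compat_mu h hvf⟩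
  · -- InjOn
    rintro ⟨g, f⟩ ⟨hg, hvf, hbw⟩ ⟨g', f'⟩ ⟨hg', hvf', hbw'⟩ heq
    simp only [Prod.mk.injEq] at heq
    obtain ⟨hγ, hgg, hμ⟩ := heq
    have h := (hπ f hvf).1
    have h' := (hπ f' hvf').1
    have hf1 : f.1 = f'.1 := by
      funext j
      have hfj := congrFun hμ ((π f).1⁻¹ j)
      rw [perm_apply_inv_self] at hfj
      rw [hγ] at hfj
      rw [perm_apply_inv_self] at hfj
      exact hfj
    have hf2 : f.2 = f'.2 := by
      funext j
      have e1 := color_inv h j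
      have e2 := color_inv h' j
      rw [hγ] at e1
      exact e1.symm.trans e2
    have : f = f' := Prod.ext hf1 hf2
    rw [this, hgg]
  · -- SurjOn
    rintro ⟨γ, lam, μ⟩ ⟨hlam, hclam, hμ, hcμ⟩
    refine ⟨(lam, mkF γ μ), ⟨hlam, mkF_valid hμ hcμ, mkF_biword hlam hclam hμ⟩, ?_⟩
    have hpf : γ = π (mkF γ μ) := (hπ (mkF γ μ) (mkF_valid hμ hcμ)).2 γ (mkF_isPi hμ hcμ)
    simp only
    rw [← hpf]
    refine Prod.ext rfl (Prod.ext rfl ?_)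
    funext i
    simp [mkF, perm_inv_apply_self]

end Paper
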